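/- Let g be a finite-dimensional simple Lie algebra over ℂ, let m ≥ 0, let g_m = g ⊗ ℂ[t]/(t^{m+1}) be the truncated current Lie algebra, and fix a nonzero x ∈ g, setting K = x⊗t ∈ g_m. Then for every Lie module R over g_m (with the underlying ℂ-vector space structure), the subspace of g_m-invariants R^{g_m} = {r ∈ R : ξ·r = 0 for all ξ ∈ g_m} equals {r ∈ R : (y⊗1)·r = 0 for all y ∈ g, and K·r = 0}; that is, R^{g_m} = { r ∈ R^{g} : K r = 0 }. -/

import Mathlib

open scoped TensorProduct

/-- The truncated polynomial ring `ℂ[t]/(t^(m+1))`. -/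
abbrev TruncPoly (m : ℕ) : Type :=
  Polynomial ℂ ⧸ Ideal.span {(Polynomial.X : Polynomial ℂ) ^ (m + 1)}

/-- The class of `t` in `ℂ[t]/(t^(m+1))`. -/
noncomputable def truncT (m : ℕ) : TruncPoly m :=
  Ideal.Quotient.mk _ (Polynomial.X : Polynomial ℂ)

/-- The truncated current Lie algebra `g_m = g ⊗ ℂ[t]/(t^(m+1))`. -/
abbrev TruncCurrent (m : ℕ) (g : Type*) [LieRing g] [LieAlgebra ℂ g] : Type _ :=
  TruncPoly m ⊗[ℂ] g

noncomputable instance (m : ℕ) (g : Type*) [LieRing g] [LieAlgebra ℂ g] :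
    LieAlgebra ℂ (TruncCurrent m g) where
  lie_smul t x y := by
    rw [← algebraMap_smul (TruncPoly m) t y]
    rw [lie_smul (algebraMap ℂ (TruncPoly m) t) x y]
    rw [algebraMap_smul]

section Aux

variable {g : Type*} [LieRing g] [LieAlgebra ℂ g] {m : ℕ}
  {R : Type*} [AddCommGroup R] [Module ℂ R] [LieRingModule (TruncCurrent m g) R]
  [LieModule ℂ (TruncCurrent m g) R]

/-- The linear map `ξ ↦ ⁅ξ, r⁆`. -/
noncomputable def bracketHom (r : R) : TruncCurrent m g →ₗ[ℂ] R where
  toFun ξ := ⁅ξ, r⁆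
  map_add' x y := add_lie x y r
  map_smul' c x := smul_lie c x r

@[simp] theorem bracketHom_apply (r : R) (ξ : TruncCurrent m g) :
    bracketHom r ξ = ⁅ξ, r⁆ := rfl

/-- The set of `y : g` with `⁅p ⊗ y, r⁆ = 0` is a Lie ideal, provided `g ⊗ 1` kills `r`. -/
noncomputable def annIdeal (p : TruncPoly m) (r : R)
    (h1 : ∀ y : g, ⁅((1 : TruncPoly m) ⊗ₜ[ℂ] y : TruncCurrent m g), r⁆ = 0) :
    LieIdeal ℂ g where
  carrier := {y : g | bracketHom r (p ⊗ₜ[ℂ] y) = 0}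
  add_mem' := by
    intro a b ha hb
    simp only [Set.mem_setOf_eq] at *
    rw [TensorProduct.tmul_add, map_add, ha, hb, add_zero]
  zero_mem' := by
    simp only [Set.mem_setOf_eq, TensorProduct.tmul_zero, map_zero]
  smul_mem' := by
    intro c y hy
    simp only [Set.mem_setOf_eq] at *
    rw [TensorProduct.tmul_smul, map_smul, hy, smul_zero]
  lie_mem := by
    intro z y hy
    simp only [Set.mem_setOf_eq, bracketHom_apply] at *
    have key : (p ⊗ₜ[ℂ] ⁅z, y⁆ : TruncCurrent m g)
        = ⁅((1 : TruncPoly m) ⊗ₜ[ℂ] z : TruncCurrent m g), p ⊗ₜ[ℂ] y⁆ := by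
      rw [LieAlgebra.ExtendScalars.bracket_tmul, one_mul]
    have e1 := @LieRingModule.leibniz_lie (TruncCurrent m g) R _ _ ‹_› ((1 : TruncPoly m) ⊗ₜ[ℂ] z : TruncCurrent m g)
      (p ⊗ₜ[ℂ] y : TruncCurrent m g) r
    rw [hy, h1 z, lie_zero, lie_zero] at e1
    rw [key]
    simpa using e1.symm

theorem mem_annIdeal_iff (p : TruncPoly m) (r : R)
    (h1 : ∀ y : g, ⁅((1 : TruncPoly m) ⊗ₜ[ℂ] y : TruncCurrent m g), r⁆ = 0) (y : g) :
    y ∈ annIdeal p r h1 ↔ ⁅(p ⊗ₜ[ℂ] y : TruncCurrent m g), r⁆ = 0 := Iff.rfl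

/-- The derived ideal of a simple Lie algebra is everything. -/
theorem derived_top (g' : Type*) [LieRing g'] [LieAlgebra ℂ g'] [LieAlgebra.IsSimple ℂ g'] :
    (⁅(⊤ : LieIdeal ℂ g'), (⊤ : LieIdeal ℂ g')⁆ : LieIdeal ℂ g') = ⊤ := by
  rcases LieAlgebra.IsSimple.eq_bot_or_eq_top
    (⁅(⊤ : LieIdeal ℂ g'), (⊤ : LieIdeal ℂ g')⁆ : LieIdeal ℂ g') with h | h
  · exfalso
    apply LieAlgebra.IsSimple.non_abelian (R := ℂ) (L := g')
    constructor
    intro a b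
    exact (LieSubmodule.lie_eq_bot_iff _ _).mp h a (LieSubmodule.mem_top a)
      b (LieSubmodule.mem_top b)
  · exact h

end Aux

/-- Let `g` be a finite-dimensional simple complex Lie algebra,
`g_m = g ⊗ ℂ[t]/(t^(m+1))` its truncated current Lie algebra, `x ∈ g` nonzero, and
`K = x ⊗ t`.  For any Lie module `R` over `g_m`, the space of `g_m`-invariants of `R`
coincides with the set of elements of `R` annihilated by `g ⊗ 1` and by `K`, i.e.
`R^{g_m} = { r ∈ R^g | K r = 0 }`. -/
theorem truncCurrent_invariants (g : Type*) [LieRing g] [LieAlgebra ℂ g]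
    [FiniteDimensional ℂ g] [LieAlgebra.IsSimple ℂ g] (m : ℕ) (x : g) (hx : x ≠ 0)
    (R : Type*) [AddCommGroup R] [Module ℂ R] [LieRingModule (TruncCurrent m g) R]
    [LieModule ℂ (TruncCurrent m g) R] :
    {r : R | ∀ ξ : TruncCurrent m g, ⁅ξ, r⁆ = 0} =
      {r : R | (∀ y : g, ⁅((1 : TruncPoly m) ⊗ₜ[ℂ] y : TruncCurrent m g), r⁆ = 0) ∧
        ⁅(truncT m ⊗ₜ[ℂ] x : TruncCurrent m g), r⁆ = 0} := by
  ext r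
  simp only [Set.mem_setOf_eq]
  constructor
  · intro h
    exact ⟨fun y => h _, h _⟩
  · rintro ⟨h1, hK⟩ ξ
    -- the Lie ideals `I k = {y | ⁅t^k ⊗ y, r⁆ = 0}`
    set I : ℕ → LieIdeal ℂ g := fun k => annIdeal (truncT m ^ k) r h1 with hI
    have hI0 : ∀ y : g, y ∈ I 0 := by
      intro y
      rw [hI, mem_annIdeal_iff, pow_zero]
      exact h1 y
    have hI1 : I 1 = ⊤ := by
      refine (LieAlgebra.IsSimple.eq_bot_or_eq_top (I 1)).resolve_left ?_
      intro hbot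
      apply hx
      have hxI : x ∈ I 1 := by
        rw [hI, mem_annIdeal_iff, pow_one]
        exact hK
      rwa [hbot, LieSubmodule.mem_bot] at hxI
    -- inductive step: if I (k+1) = ⊤ then I (k+2) = ⊤
    have hItop : ∀ k : ℕ, I (k + 1) = ⊤ := by
      intro k
      induction k with
      | zero => exact hI1
      | succ k ih =>
        rw [eq_top_iff, ← derived_top g]
        rw [LieSubmodule.lieIdeal_oper_eq_span, LieSubmodule.lieSpan_le]
        rintro z ⟨a, b, rfl⟩
        have haz : ⁅(truncT m ⊗ₜ[ℂ] (a : g) : TruncCurrent m g), r⁆ = 0 := by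
          have : (a : g) ∈ I 1 := by rw [hI1]; exact LieSubmodule.mem_top _
          rw [hI, mem_annIdeal_iff, pow_one] at this
          exact this
        have hbz : ⁅((truncT m ^ (k + 1)) ⊗ₜ[ℂ] (b : g) : TruncCurrent m g), r⁆ = 0 := by
          have : (b : g) ∈ I (k + 1) := by rw [ih]; exact LieSubmodule.mem_top _
          rw [hI, mem_annIdeal_iff] at this
          exact this
        show bracketHom r ((truncT m ^ (k + 1 + 1)) ⊗ₜ[ℂ] ⁅(a : g), (b : g)⁆) = 0
        rw [bracketHom_apply]
        have key : ((truncT m ^ (k + 1 + 1)) ⊗ₜ[ℂ] ⁅(a : g), (b : g)⁆ : TruncCurrent m g)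
            = ⁅(truncT m ⊗ₜ[ℂ] (a : g) : TruncCurrent m g),
                (truncT m ^ (k + 1)) ⊗ₜ[ℂ] (b : g)⁆ := by
          rw [LieAlgebra.ExtendScalars.bracket_tmul, ← pow_succ']
        have e1 := @LieRingModule.leibniz_lie (TruncCurrent m g) R _ _ ‹_› (truncT m ⊗ₜ[ℂ] (a : g) : TruncCurrent m g)
          ((truncT m ^ (k + 1)) ⊗ₜ[ℂ] (b : g) : TruncCurrent m g) r
        rw [haz, hbz, lie_zero, lie_zero] at e1
        rw [key]
        simpa using e1.symm
    -- every `t^k ⊗ y` kills `r`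
    have hkey : ∀ (k : ℕ) (y : g),
        ⁅((truncT m ^ k) ⊗ₜ[ℂ] y : TruncCurrent m g), r⁆ = 0 := by
      intro k y
      match k with
      | 0 => exact hI0 y
      | k + 1 =>
        have : y ∈ I (k + 1) := by rw [hItop k]; exact LieSubmodule.mem_top _
        rw [hI, mem_annIdeal_iff] at this
        exact this
    -- conclude by linearity
    show bracketHom r ξ = 0
    induction ξ using TensorProduct.induction_on with
    | zero => exact map_zero _
    | add u v hu hv => rw [map_add, hu, hv, add_zero]
    | tmul p y =>
      obtain ⟨q, rfl⟩ := Ideal.Quotient.mk_surjective p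
      induction q using Polynomial.induction_on' with
      | add p q hp hq =>
        rw [map_add, TensorProduct.add_tmul, map_add, hp, hq, add_zero]
      | monomial n a =>
        have : (Ideal.Quotient.mk (Ideal.span {(Polynomial.X : Polynomial ℂ) ^ (m + 1)})
            (Polynomial.monomial n a)) = a • truncT m ^ n := by
          rw [← Polynomial.C_mul_X_pow_eq_monomial, ← Polynomial.smul_eq_C_mul,
            ← Ideal.Quotient.mkₐ_eq_mk ℂ, map_smul, map_pow]
          rfl
        rw [this, ← TensorProduct.smul_tmul', map_smul]
        rw [show bracketHom r ((truncT m ^ n) ⊗ₜ[ℂ] y) = 0 from hkey n y, smul_zero]
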